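/- Let z be a random vector in ℝ^d with second-moment matrix M := E[z zᵀ] ≠ 0, and suppose there exist a unit vector u⋆ ∈ ℝ^d and constants p₀ ∈ (0,1), c₀ > 0 satisfying the small-ball condition P(⟨z,u⋆⟩² ≥ c₀‖M‖_op) ≥ p₀. Let z_1,…,z_n be iid copies of z and Z_n := [z_1,…,z_n] ∈ ℝ^{d×n}. Then for any c ∈ (0,1/2), provided n ≥ (8/p₀)·log(1/c), with probability at least 1 − 2c one has Z_n ≠ 0 and st(Z_n) ≤ (2/(p₀ c₀ c)) · er(M). -/

import Mathlib

open MeasureTheory ProbabilityTheory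

noncomputable section

/-- Squared Frobenius norm of a real matrix. -/
def frobSq {m n : Type*} [Fintype m] [Fintype n] (A : Matrix m n ℝ) : ℝ :=
  ∑ i, ∑ j, (A i j) ^ 2

/-- Spectral (largest-singular-value) norm of a real matrix. -/
def opNorm {m n : Type*} [Fintype m] [Fintype n] [DecidableEq n] (A : Matrix m n ℝ) : ℝ :=
  ‖LinearMap.toContinuousLinearMap (Matrix.toEuclideanLin A)‖

/-- Stable rank `st(A) = ‖A‖_F² / ‖A‖_op²`. -/
def stRank {m n : Type*} [Fintype m] [Fintype n] [DecidableEq n] (A : Matrix m n ℝ) : ℝ :=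
  frobSq A / (opNorm A) ^ 2


lemma opNorm_zero' {m n : Type*} [Fintype m] [Fintype n] [DecidableEq n] :
    opNorm (0 : Matrix m n ℝ) = 0 := by
  simp [opNorm, map_zero]

lemma opNorm_pos {m n : Type*} [Fintype m] [Fintype n] [DecidableEq n]
    {A : Matrix m n ℝ} (hA : A ≠ 0) : 0 < opNorm A := by
  rcases (norm_nonneg (LinearMap.toContinuousLinearMap (Matrix.toEuclideanLin A))).lt_or_eq
    with h | h
  · exact h
  · exfalso
    apply hA
    have h0 : LinearMap.toContinuousLinearMap (Matrix.toEuclideanLin A) = 0 :=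
      norm_eq_zero.mp h.symm
    have h1 : Matrix.toEuclideanLin A
        = ((0 : EuclideanSpace ℝ n →L[ℝ] EuclideanSpace ℝ m) : _ →ₗ[ℝ] _) := by
      rw [← LinearMap.coe_toContinuousLinearMap (Matrix.toEuclideanLin A), h0]
    have h2 : Matrix.toEuclideanLin A = 0 := by simpa using h1
    exact (map_eq_zero_iff _ Matrix.toEuclideanLin.injective).mp h2

lemma sum_sq_dot_le {d n : ℕ} (A : Matrix (Fin d) (Fin n) ℝ) (u : Fin d → ℝ)
    (hu : ∑ a, (u a) ^ 2 = 1) :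
    ∑ t, (∑ a, A a t * u a) ^ 2 ≤ (opNorm A) ^ 2 := by
  classical
  set L := LinearMap.toContinuousLinearMap (Matrix.toEuclideanLin A) with hL
  set v : EuclideanSpace ℝ (Fin n) :=
    (WithLp.equiv 2 (Fin n → ℝ)).symm (fun t => ∑ a, A a t * u a) with hv
  set uE : EuclideanSpace ℝ (Fin d) := (WithLp.equiv 2 (Fin d → ℝ)).symm u with huE
  have hnormu : ‖uE‖ = 1 := by
    rw [EuclideanSpace.norm_eq]
    have : ∑ a, ‖uE a‖ ^ 2 = 1 := by
      simpa [huE, Real.norm_eq_abs, sq_abs] using hu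
    rw [this, Real.sqrt_one]
  have hvsum : ‖v‖ ^ 2 = ∑ t, (∑ a, A a t * u a) ^ 2 := by
    rw [EuclideanSpace.norm_eq, Real.sq_sqrt (by positivity)]
    simp [hv, Real.norm_eq_abs, sq_abs]
  have hinner : (inner ℝ uE (L v) : ℝ) = ‖v‖ ^ 2 := by
    rw [hvsum]
    have hLv : L v = (WithLp.equiv 2 (Fin d → ℝ)).symm
        (A.mulVec (fun t => ∑ a, A a t * u a)) := by
      simp [hL, hv, Matrix.toEuclideanLin_apply]
    rw [hLv, PiLp.inner_apply]
    simp only [RCLike.inner_apply, starRingEnd_apply, star_trivial]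
    have huEa : ∀ a : Fin d, uE a = u a := fun a => rfl
    have hsa : ∀ a : Fin d, ((WithLp.equiv 2 (Fin d → ℝ)).symm
        (A.mulVec (fun t => ∑ b, A b t * u b))) a
        = ∑ t, A a t * (∑ b, A b t * u b) := fun a => rfl
    simp only [huEa, hsa]
    simp_rw [Finset.sum_mul, Finset.mul_sum]
    refine Finset.sum_comm.trans ?_
    apply Finset.sum_congr rfl
    intro t _
    rw [pow_two, Finset.sum_mul_sum]
    apply Finset.sum_congr rfl
    intro a _
    refine (Finset.sum_mul _ _ _).trans ?_
    apply Finset.sum_congr rfl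
    intro b _
    ring
  have hcs : ‖v‖ ^ 2 ≤ ‖L‖ * ‖v‖ := by
    calc ‖v‖ ^ 2 = inner ℝ uE (L v) := hinner.symm
    _ ≤ ‖uE‖ * ‖L v‖ := real_inner_le_norm _ _
    _ = ‖L v‖ := by rw [hnormu, one_mul]
    _ ≤ ‖L‖ * ‖v‖ := L.le_opNorm v
  have : ‖v‖ ^ 2 ≤ ‖L‖ ^ 2 := by
    nlinarith [norm_nonneg v, norm_nonneg L, sq_nonneg (‖L‖ - ‖v‖)]
  rw [← hvsum]
  exact this


lemma chernoff_indicator {Ω : Type*} [MeasurableSpace Ω] (P : Measure Ω) [IsProbabilityMeasure P]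
    {n : ℕ} (X : Fin n → Ω → ℝ)
    (hind : iIndepFun X P)
    (hmeas : ∀ i, Measurable (X i))
    (hval : ∀ i ω, X i ω = 0 ∨ X i ω = 1)
    (p₀ : ℝ) (hp0 : 0 < p₀)
    (hp : ∀ i, p₀ ≤ (P {ω | X i ω = 1}).toReal) :
    (P {ω | (∑ i, X i ω) ≤ p₀ * n / 2}).toReal ≤ Real.exp (-(p₀ * n) / 8) := by
  classical
  set t : ℝ := -Real.log 2 with htdef
  have ht : t ≤ 0 := neg_nonpos.mpr (Real.log_nonneg one_le_two)
  have hexpt : Real.exp t = 1/2 := by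
    rw [htdef, Real.exp_neg, Real.exp_log two_pos]; norm_num
  have hSmeas : ∀ i, MeasurableSet {ω | X i ω = 1} := fun i =>
    (hmeas i) (measurableSet_singleton 1)
  have hXind : ∀ i, X i = Set.indicator {ω | X i ω = 1} (fun _ => (1:ℝ)) := by
    intro i; funext ω
    rcases hval i ω with h | h
    · rw [h, Set.indicator_apply_eq_zero.mpr]
      intro hω; exact absurd (Set.mem_setOf_eq ▸ hω) (by rw [h]; norm_num)
    · rw [h, eq_comm, Set.indicator_apply_eq_self.symm.symm]
      simp [Set.indicator_apply, h]
  have hint : ∀ i, Integrable (X i) P := fun i => by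
    rw [hXind i]; exact (integrable_const 1).indicator (hSmeas i)
  have hintX : ∀ i, ∫ ω, X i ω ∂P = (P {ω | X i ω = 1}).toReal := fun i => by
    conv_lhs => rw [hXind i]
    exact integral_indicator_one (hSmeas i)
  have hexp : ∀ i ω, Real.exp (t * X i ω) = 1 + (Real.exp t - 1) * X i ω := by
    intro i ω
    rcases hval i ω with h | h <;> rw [h] <;> simp
  have hintexp : ∀ i, Integrable (fun ω => Real.exp (t * X i ω)) P := fun i => by
    simp_rw [hexp i]
    exact (integrable_const 1).add ((hint i).const_mul _)
  have hmgf : ∀ i, mgf (X i) P t = 1 + (Real.exp t - 1) * (P {ω | X i ω = 1}).toReal := by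
    intro i
    rw [mgf]
    simp_rw [hexp i]
    rw [integral_add (integrable_const 1) ((hint i).const_mul _), integral_const,
      integral_const_mul, hintX i]
    simp
  have hq1 : ∀ i, (P {ω | X i ω = 1}).toReal ≤ 1 := fun i => by
    rw [← ENNReal.toReal_one]
    exact ENNReal.toReal_mono ENNReal.one_ne_top prob_le_one
  have hmgf_le : ∀ i, mgf (X i) P t ≤ Real.exp (-(p₀/2)) := by
    intro i
    rw [hmgf i, hexpt]
    have h1 : 1 + (1/2 - 1) * (P {ω | X i ω = 1}).toReal ≤ 1 + (-(p₀/2)) := by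
      nlinarith [hp i]
    exact h1.trans (by linarith [Real.add_one_le_exp (-(p₀/2))])
  have key := measure_le_le_exp_mul_mgf (X := ∑ i, X i) (μ := P) (p₀ * n / 2) ht
    (hind.integrable_exp_mul_sum hmeas (fun i _ => hintexp i))
  rw [hind.mgf_sum hmeas] at key
  have hprod : ∏ i : Fin n, mgf (X i) P t ≤ Real.exp (-(p₀/2)) ^ n := by
    calc ∏ i : Fin n, mgf (X i) P t ≤ ∏ _i : Fin n, Real.exp (-(p₀/2)) :=
          Finset.prod_le_prod (fun i _ => mgf_nonneg) (fun i _ => hmgf_le i)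
      _ = Real.exp (-(p₀/2)) ^ n := by simp [Finset.prod_const, Finset.card_fin]
  have hset : {ω | (∑ i, X i) ω ≤ p₀ * n / 2} = {ω | (∑ i, X i ω) ≤ p₀ * n / 2} := by
    ext ω; simp [Finset.sum_apply]
  rw [hset] at key
  refine key.trans ?_
  have h2 : Real.exp (-t * (p₀ * n / 2)) * ∏ i : Fin n, mgf (X i) P t
      ≤ Real.exp (-t * (p₀ * n / 2)) * Real.exp (-(p₀/2)) ^ n :=
    mul_le_mul_of_nonneg_left hprod (Real.exp_nonneg _)
  refine h2.trans ?_
  rw [← Real.exp_nat_mul, ← Real.exp_add, Real.exp_le_exp, htdef]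
  have hlog2 : Real.log 2 < 0.6931471808 := Real.log_two_lt_d9
  have hn0 : (0:ℝ) ≤ n := Nat.cast_nonneg n
  nlinarith [mul_nonneg (mul_nonneg hp0.le hn0) (by norm_num : (0:ℝ) ≤ 0.75 - 0.6931471808)]

/-- Constant-probability stable-rank bound from a small-ball condition:
if `P(⟨z,u⋆⟩² ≥ c₀‖M‖_op) ≥ p₀` for some unit `u⋆`, then for `c ∈ (0,1/2)` and
`n ≥ (8/p₀)·log(1/c)`, with probability at least `1 − 2c`, `Z_n ≠ 0` and
`st(Z_n) ≤ (2/(p₀c₀c))·er(M)`. -/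
theorem stable_rank_small_ball
    {Ω : Type*} [MeasurableSpace Ω] (P : Measure Ω) [IsProbabilityMeasure P]
    (d n : ℕ) (hd : 0 < d)
    (μ : Measure (Fin d → ℝ)) [IsProbabilityMeasure μ]
    (hmoment : ∀ a b : Fin d, Integrable (fun x => x a * x b) μ)
    (M : Matrix (Fin d) (Fin d) ℝ)
    (hM : ∀ a b, M a b = ∫ x, x a * x b ∂μ)
    (hM0 : M ≠ 0)
    (ustar : Fin d → ℝ) (hu : ∑ a, (ustar a) ^ 2 = 1)
    (p₀ c₀ : ℝ) (hp₀ : p₀ ∈ Set.Ioo (0:ℝ) 1) (hc₀ : 0 < c₀)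
    (hsb : ENNReal.ofReal p₀ ≤ μ {x | c₀ * opNorm M ≤ (∑ a, x a * ustar a) ^ 2})
    (zs : Fin n → Ω → (Fin d → ℝ))
    (hmeas : ∀ i, Measurable (zs i))
    (hindep : iIndepFun zs P)
    (hlaw : ∀ i, Measure.map (zs i) P = μ)
    (Z : Ω → Matrix (Fin d) (Fin n) ℝ)
    (hZ : ∀ ω (a : Fin d) (t : Fin n), Z ω a t = zs t ω a)
    (c : ℝ) (hc : c ∈ Set.Ioo (0:ℝ) (1/2))
    (hn : (8 / p₀) * Real.log (1 / c) ≤ (n : ℝ)) :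
    ENNReal.ofReal (1 - 2 * c) ≤
      P {ω | Z ω ≠ 0 ∧
        stRank (Z ω) ≤ (2 / (p₀ * c₀ * c)) * (Matrix.trace M / opNorm M)} := by
  classical
  obtain ⟨hp0, hp01⟩ := hp₀
  obtain ⟨hc0, hc2⟩ := hc
  have hMop : 0 < opNorm M := opNorm_pos hM0
  -- positivity of n
  have hlogc : 0 < Real.log (1 / c) := Real.log_pos (by rw [lt_div_iff₀ hc0]; linarith)
  have hnpos : (0:ℝ) < n := lt_of_lt_of_le (by positivity) hn
  -- trace positivity
  have hdiag : ∀ a, 0 ≤ M a a := by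
    intro a; rw [hM a a]; exact integral_nonneg fun x => mul_self_nonneg _
  have htrace_eq : Matrix.trace M = ∑ a, M a a := rfl
  have htr : 0 < Matrix.trace M := by
    rcases (Finset.sum_nonneg (fun a _ => hdiag a)).lt_or_eq with h | h
    · rw [htrace_eq]; exact h
    · exfalso; apply hM0
      have hdiag0 : ∀ a, M a a = 0 := by
        intro a
        have := (Finset.sum_eq_zero_iff_of_nonneg (fun a _ => hdiag a)).mp h.symm
        exact this a (Finset.mem_univ a)
      ext a b
      have h1 : |M a b| ≤ (M a a + M b b) / 2 := by
        rw [hM a b]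
        calc |∫ x, x a * x b ∂μ| ≤ ∫ x, |x a * x b| ∂μ := by
              have := norm_integral_le_integral_norm (fun x : Fin d → ℝ => x a * x b) (μ := μ)
              simpa only [Real.norm_eq_abs] using this
          _ ≤ ∫ x, (x a * x a + x b * x b) / 2 ∂μ := by
              apply integral_mono (hmoment a b).abs
                (((hmoment a a).add (hmoment b b)).div_const 2)
              intro x
              simp only [Pi.add_apply]
              have := sq_nonneg (|x a| - |x b|)
              rw [abs_mul]
              nlinarith [sq_abs (x a), sq_abs (x b)]
          _ = (M a a + M b b) / 2 := by
              rw [integral_div, integral_add (hmoment a a) (hmoment b b),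
                hM a a, hM b b]
      rw [hdiag0 a, hdiag0 b] at h1
      simp only [Matrix.zero_apply]
      have h2 : |M a b| ≤ 0 := by simpa using h1
      exact abs_nonpos_iff.mp h2
  -- Frobenius part: Markov
  set F : Ω → ℝ := fun ω => ∑ t : Fin n, ∑ a : Fin d, (zs t ω a) ^ 2 with hFdef
  have hterm_int : ∀ (t : Fin n) (a : Fin d),
      Integrable (fun ω => (zs t ω a) ^ 2) P := by
    intro t a
    have h1 : Integrable (fun x : Fin d → ℝ => x a * x a) (Measure.map (zs t) P) := by
      rw [hlaw t]; exact hmoment a a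
    have h2 := (integrable_map_measure
      (((measurable_pi_apply a).mul (measurable_pi_apply a)).aestronglyMeasurable)
      (hmeas t).aemeasurable).mp h1
    simp only [pow_two]; exact h2
  have hterm_val : ∀ (t : Fin n) (a : Fin d),
      ∫ ω, (zs t ω a) ^ 2 ∂P = M a a := by
    intro t a
    have h1 : ∫ x, x a * x a ∂(Measure.map (zs t) P) = ∫ ω, zs t ω a * zs t ω a ∂P :=
      integral_map (hmeas t).aemeasurable
        (((measurable_pi_apply a).mul (measurable_pi_apply a)).aestronglyMeasurable)
    rw [hM a a, ← hlaw t, h1]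
    simp [pow_two]
  have hFint : Integrable F P := by
    apply integrable_finset_sum
    intro t _
    exact integrable_finset_sum _ (fun a _ => hterm_int t a)
  have hFval : ∫ ω, F ω ∂P = n * Matrix.trace M := by
    rw [hFdef]
    rw [integral_finset_sum _ (fun t _ => integrable_finset_sum _ (fun a _ => hterm_int t a))]
    have : ∀ t : Fin n, ∫ ω, ∑ a, (zs t ω a) ^ 2 ∂P = Matrix.trace M := by
      intro t
      rw [integral_finset_sum _ (fun a _ => hterm_int t a), htrace_eq]
      exact Finset.sum_congr rfl fun a _ => hterm_val t a
    rw [Finset.sum_congr rfl fun t _ => this t]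
    simp [mul_comm]
  set U : ℝ := ↑n * Matrix.trace M / c with hUdef
  have hU : 0 < U := by positivity
  have hmark : (P {ω | U ≤ F ω}).toReal ≤ c := by
    have h1 := mul_meas_ge_le_integral_of_nonneg
      (ae_of_all P (fun ω => by positivity : ∀ ω, 0 ≤ F ω)) hFint U
    rw [hFval] at h1
    have hUc : U * c = ↑n * Matrix.trace M := by
      rw [hUdef]; field_simp
    have h2 : U * (P {ω | U ≤ F ω}).toReal ≤ U * c := by rw [hUc]; exact h1
    exact le_of_mul_le_mul_left h2 hU
  -- indicator random variables
  set S : Set (Fin d → ℝ) := {x | c₀ * opNorm M ≤ (∑ a, x a * ustar a) ^ 2} with hSdef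
  have hSm : MeasurableSet S := by
    apply measurableSet_le measurable_const
    exact (Finset.measurable_sum Finset.univ
      (fun a _ => (measurable_pi_apply a).mul_const _)).pow_const 2
  set g : (Fin d → ℝ) → ℝ := S.indicator (fun _ => (1:ℝ)) with hgdef
  have hgm : Measurable g := measurable_const.indicator hSm
  set X : Fin n → Ω → ℝ := fun i ω => g (zs i ω) with hXdef
  have hXmeas : ∀ i, Measurable (X i) := fun i => hgm.comp (hmeas i)
  have hXind : iIndepFun X P :=
    hindep.comp (fun _ => g) (fun _ => hgm)
  have hXval : ∀ i ω, X i ω = 0 ∨ X i ω = 1 := by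
    intro i ω
    by_cases h : zs i ω ∈ S
    · right; simp [hXdef, hgdef, Set.indicator_of_mem h]
    · left; simp [hXdef, hgdef, Set.indicator_of_notMem h]
  have hXone : ∀ i ω, X i ω = 1 ↔ zs i ω ∈ S := by
    intro i ω
    by_cases h : zs i ω ∈ S
    · simp [hXdef, hgdef, Set.indicator_of_mem h, h]
    · simp [hXdef, hgdef, Set.indicator_of_notMem h, h]
  have hpX : ∀ i, p₀ ≤ (P {ω | X i ω = 1}).toReal := by
    intro i
    have hset : {ω | X i ω = 1} = zs i ⁻¹' S := by
      ext ω; exact hXone i ω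
    have hPmap : P (zs i ⁻¹' S) = μ S := by
      rw [← hlaw i, Measure.map_apply (hmeas i) hSm]
    rw [hset, hPmap]
    exact (ENNReal.ofReal_le_iff_le_toReal (measure_ne_top μ S)).mp hsb
  have chern := chernoff_indicator P X hXind hXmeas hXval p₀ hp0 hpX
  have hexpc : Real.exp (-(p₀ * ↑n) / 8) ≤ c := by
    have h8 : Real.log (1 / c) ≤ p₀ * ↑n / 8 := by
      have h9 := mul_le_mul_of_nonneg_left hn hp0.le
      have h10 : 8 * Real.log (1 / c) = p₀ * (8 / p₀ * Real.log (1 / c)) := by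
        field_simp
      have h11 : 8 * Real.log (1 / c) ≤ p₀ * ↑n := by rw [h10]; exact h9
      linarith
    calc Real.exp (-(p₀ * ↑n) / 8) ≤ Real.exp (Real.log c) := by
          rw [Real.exp_le_exp]
          rw [one_div, Real.log_inv] at h8
          linarith
      _ = c := Real.exp_log hc0
  -- good event
  set B1 : Set Ω := {ω | U ≤ F ω} with hB1def
  set B2 : Set Ω := {ω | (∑ i, X i ω) ≤ p₀ * ↑n / 2} with hB2def
  have hFmeas : Measurable F :=
    Finset.measurable_sum _ (fun t _ => Finset.measurable_sum _
      (fun a _ => ((measurable_pi_apply a).comp (hmeas t)).pow_const 2))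
  have hB1m : MeasurableSet B1 := measurableSet_le measurable_const hFmeas
  have hB2m : MeasurableSet B2 :=
    measurableSet_le (Finset.measurable_sum _ (fun i _ => hXmeas i)) measurable_const
  -- inclusion
  have hincl : B1ᶜ ∩ B2ᶜ ⊆ {ω | Z ω ≠ 0 ∧
      stRank (Z ω) ≤ (2 / (p₀ * c₀ * c)) * (Matrix.trace M / opNorm M)} := by
    rintro ω ⟨h1, h2⟩
    have hFω : F ω ≤ U := le_of_lt (lt_of_not_ge h1)
    have hXω : p₀ * ↑n / 2 ≤ ∑ i, X i ω := le_of_lt (lt_of_not_ge h2)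
    set L : ℝ := p₀ * ↑n / 2 * (c₀ * opNorm M) with hLdef
    have hL : 0 < L := by positivity
    have hop : L ≤ (opNorm (Z ω)) ^ 2 := by
      have hstep : ∀ t : Fin n, X t ω * (c₀ * opNorm M) ≤ (∑ a, Z ω a t * ustar a) ^ 2 := by
        intro t
        rcases hXval t ω with h | h
        · rw [h, zero_mul]; positivity
        · rw [h, one_mul]
          have hmem : zs t ω ∈ S := (hXone t ω).mp h
          have : c₀ * opNorm M ≤ (∑ a, zs t ω a * ustar a) ^ 2 := hmem
          simpa [hZ ω] using this
      calc L ≤ (∑ i, X i ω) * (c₀ * opNorm M) :=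
            mul_le_mul_of_nonneg_right hXω (by positivity)
        _ = ∑ t, X t ω * (c₀ * opNorm M) := Finset.sum_mul Finset.univ (fun i => X i ω) (c₀ * opNorm M)
        _ ≤ ∑ t, (∑ a, Z ω a t * ustar a) ^ 2 := Finset.sum_le_sum fun t _ => hstep t
        _ ≤ (opNorm (Z ω)) ^ 2 := sum_sq_dot_le (Z ω) ustar hu
    have hZne : Z ω ≠ 0 := by
      intro h0
      rw [h0, opNorm_zero'] at hop
      norm_num at hop
      nlinarith
    refine ⟨hZne, ?_⟩
    have hfrob : frobSq (Z ω) ≤ U := by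
      have : frobSq (Z ω) = F ω := by
        rw [frobSq, hFdef, Finset.sum_comm]
        exact Finset.sum_congr rfl fun t _ => Finset.sum_congr rfl fun a _ => by rw [hZ ω a t]
      rw [this]; exact hFω
    have hdiv : stRank (Z ω) ≤ U / L := by
      rw [stRank]
      exact div_le_div₀ hU.le hfrob hL hop
    refine hdiv.trans (le_of_eq ?_)
    rw [hUdef, hLdef]
    have hn0 : (n:ℝ) ≠ 0 := ne_of_gt hnpos
    field_simp
  -- combine
  have hB1le : P B1 ≤ ENNReal.ofReal c :=
    (ENNReal.le_ofReal_iff_toReal_le (measure_ne_top P B1) hc0.le).mpr hmark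
  have hB2le : P B2 ≤ ENNReal.ofReal c :=
    (ENNReal.le_ofReal_iff_toReal_le (measure_ne_top P B2) hc0.le).mpr (chern.trans hexpc)
  have hGm : MeasurableSet (B1ᶜ ∩ B2ᶜ) := hB1m.compl.inter hB2m.compl
  have hcompl : P ((B1ᶜ ∩ B2ᶜ)ᶜ) ≤ ENNReal.ofReal (2 * c) := by
    rw [Set.compl_inter, compl_compl, compl_compl]
    calc P (B1 ∪ B2) ≤ P B1 + P B2 := measure_union_le _ _
      _ ≤ ENNReal.ofReal c + ENNReal.ofReal c := add_le_add hB1le hB2le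
      _ = ENNReal.ofReal (2 * c) := by
          rw [← ENNReal.ofReal_add hc0.le hc0.le]; ring_nf
  have hkey : ENNReal.ofReal (1 - 2 * c) ≤ P (B1ᶜ ∩ B2ᶜ) := by
    have hsum : P (B1ᶜ ∩ B2ᶜ) + P ((B1ᶜ ∩ B2ᶜ)ᶜ) = 1 := by
      rw [measure_add_measure_compl hGm]; simp
    have h1 : ENNReal.ofReal (1 - 2 * c) + ENNReal.ofReal (2 * c) = 1 := by
      rw [← ENNReal.ofReal_add (by linarith) (by linarith)]
      norm_num
    have h2 : ENNReal.ofReal (1 - 2 * c) + ENNReal.ofReal (2 * c)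
        ≤ P (B1ᶜ ∩ B2ᶜ) + ENNReal.ofReal (2 * c) := by
      rw [h1, ← hsum]
      exact add_le_add_right hcompl _
    exact ENNReal.le_of_add_le_add_right ENNReal.ofReal_ne_top h2
  exact hkey.trans (measure_mono hincl)
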